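/- Let u, v ∈ V with |N_u^+ ∩ N_v^-| ≥ |N_u^+|/2. Then the probability that Y^{(u,v)} ≤ (1−ε)·|N_u^+ ∩ N_v^-| is at most n^{−ε²C(ε)/8} = n^{−4}, and the probability that Y^{(u,v)} ≥ (1+ε)·|N_u^+ ∩ N_v^-| is at most n^{−4}. -/

import Mathlib

open Finset

/-- Positive neighborhood of `u`. -/
def Np {V : Type*} [Fintype V] (pos : V → V → Bool) (u : V) : Finset V :=
  Finset.univ.filter (fun v => pos u v)

/-- Negative neighborhood of `u`. -/
def Nm {V : Type*} [Fintype V] (pos : V → V → Bool) (u : V) : Finset V :=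
  Finset.univ.filter (fun v => ¬ pos u v)

/-- The correlation metric. -/
noncomputable def corrDist {V : Type*} [Fintype V] [DecidableEq V]
    (pos : V → V → Bool) (u v : V) : ℝ :=
  1 - ((Np pos u ∩ Np pos v).card : ℝ) /
      ((Fintype.card V : ℝ) - ((Nm pos u ∩ Nm pos v).card : ℝ))

/-- Number of disagreements incident to `u` under the clustering `C`. -/
def yC {V : Type*} [Fintype V] [DecidableEq V] (pos : V → V → Bool) (C : V → ℕ) (u : V) : ℕ :=
  (Finset.univ.filter (fun v => v ≠ u ∧
    ((pos u v ∧ C u ≠ C v) ∨ (¬ (pos u v) ∧ C u = C v)))).card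

/-- Optimal value of the Min Max correlation clustering objective. -/
noncomputable def OPT {V : Type*} [Fintype V] [DecidableEq V] (pos : V → V → Bool) : ℕ :=
  sInf { k : ℕ | ∃ C : V → ℕ, k = Finset.univ.sup (yC pos C) }

/-- `d̂`. -/
noncomputable def dhat {V : Type*} [Fintype V] [DecidableEq V]
    (pos : V → V → Bool) (u v : V) : ℝ :=
  if pos u v then corrDist pos u v else 1 - corrDist pos u v

/-- number of samples. -/
noncomputable def mSample (V : Type*) [Fintype V] (ε : ℝ) : ℕ :=
  ⌈(32 / ε ^ 2) * Real.log (Fintype.card V)⌉₊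

/-- Sample space: one subset of `N_u^+` of size `min m |N_u^+|` per vertex `u`. -/
abbrev SampleSpace {V : Type*} [Fintype V] [DecidableEq V]
    (pos : V → V → Bool) (m : ℕ) : Type _ :=
  ∀ u : V, {s : Finset V // s ⊆ Np pos u ∧ s.card = min m (Np pos u).card}

/-- Uniform probability of an event over a finite sample space. -/
noncomputable def prob {Ω : Type*} [Fintype Ω] (E : Set Ω) : ℝ :=
  (E.ncard : ℝ) / (Fintype.card Ω : ℝ)

noncomputable def West {V : Type*} [Fintype V] [DecidableEq V]
    (pos : V → V → Bool) {m : ℕ} (ω : SampleSpace pos m) (u v : V) : ℝ :=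
  if m ≤ (Np pos u).card then
    ((Np pos u).card : ℝ) / m * (((ω u).1 ∩ Np pos v).card : ℝ)
  else ((Np pos u ∩ Np pos v).card : ℝ)

noncomputable def Yest {V : Type*} [Fintype V] [DecidableEq V]
    (pos : V → V → Bool) {m : ℕ} (ω : SampleSpace pos m) (u v : V) : ℝ :=
  if m ≤ (Np pos u).card then
    ((Np pos u).card : ℝ) / m * (((ω u).1 ∩ Nm pos v).card : ℝ)
  else ((Np pos u ∩ Nm pos v).card : ℝ)

/-- Initial estimate of the correlation metric for a pair labeled with `|N_v^+| ≥ |N_u^+|`. -/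
noncomputable def dbar {V : Type*} [Fintype V] [DecidableEq V]
    (pos : V → V → Bool) {m : ℕ} (ω : SampleSpace pos m) (u v : V) : ℝ :=
  (Yest pos ω u v + Yest pos ω v u) / (((Np pos u).card : ℝ) + Yest pos ω v u)

/-- Initial estimate, with the pair relabeled so the vertex with larger
positive neighborhood comes second. -/
noncomputable def dbarS {V : Type*} [Fintype V] [DecidableEq V]
    (pos : V → V → Bool) {m : ℕ} (ω : SampleSpace pos m) (u v : V) : ℝ :=
  if (Np pos u).card ≤ (Np pos v).card then dbar pos ω u v else dbar pos ω v u

noncomputable def cc1 (ε : ℝ) : ℝ := (1 + ε) / (1 - ε)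
noncomputable def hh1 (ε : ℝ) : ℝ := 2 * ε / (1 - ε)
noncomputable def cc2 (ε : ℝ) : ℝ := (1 + ε) / (1 - ε)
noncomputable def hh2 (ε : ℝ) : ℝ := 2 * ε / (1 - ε)
noncomputable def cc3 (ε : ℝ) : ℝ := ((1 + ε) / (1 - ε)) ^ 2
noncomputable def hh3 (ε : ℝ) : ℝ := (2 * ε / (1 - ε)) * (1 + 2 * (1 + ε) / (1 - ε))
noncomputable def cc4 (ε : ℝ) : ℝ := (2 * cc3 ε + 1) * cc3 ε
noncomputable def hh4 (ε : ℝ) : ℝ := (4 * cc3 ε + 1) * (2 * cc3 ε + 1) * hh3 ε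
noncomputable def DD (ε : ℝ) : ℝ := 2 * cc3 ε

/-- Post-processed estimate. -/
noncomputable def dtilde {V : Type*} [Fintype V] [DecidableEq V] (ε : ℝ)
    (pos : V → V → Bool) {m : ℕ} (ω : SampleSpace pos m) (u v : V) : ℝ :=
  if pos u v ∧ dbarS pos ω u v ≤ 2 * hh3 ε then 0
  else if ¬ (pos u v) ∧ 1 / (2 * cc3 ε + 1) ≤ dbarS pos ω u v then 1
  else dbarS pos ω u v

/-- The radius `r(δ₁, δ₂)` from Appendix B. -/
noncomputable def rr (δ1 δ2 : ℝ) : ℝ :=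
  (1 - δ2 - δ1 * δ2 - δ1 ^ 2 * δ2 - δ1 ^ 3 * δ2) /
    (δ1 ^ 2 + δ1 ^ 3 * (δ1 + 1) + δ1 + 1)

noncomputable def c1const (δ1 δ2 : ℝ) : ℝ := δ1 + δ2 / rr δ1 δ2
noncomputable def bconst (δ1 δ2 : ℝ) : ℝ := (c1const δ1 δ2 + 1) * δ1 + δ2 / rr δ1 δ2
noncomputable def c2const (δ1 δ2 : ℝ) : ℝ := δ1 * (bconst δ1 δ2 + 1) + δ2 / rr δ1 δ2


section AuxProof


-- product formula for factorial ratios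
lemma fact_prod_cast (x : ℕ) : ∀ σ : ℕ, σ ≤ x →
    ((Nat.factorial (x - σ) : ℝ)) * ∏ j ∈ Finset.range σ, ((x : ℝ) - j) = (Nat.factorial x : ℝ)
  | 0, _ => by simp
  | σ + 1, h => by
    have h1 : σ ≤ x := Nat.le_of_succ_le h
    have h2 : x - σ = (x - (σ + 1)) + 1 := by omega
    have h3 : ((x : ℝ) - σ) = ((x - (σ + 1) : ℕ) : ℝ) + 1 := by
      have : ((x - (σ+1) : ℕ) : ℝ) = (x : ℝ) - (σ + 1) := by
        push_cast [Nat.cast_sub h]; ring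
      rw [this]; ring
    have IH := fact_prod_cast x σ h1
    rw [Finset.prod_range_succ, ← IH, h2, Nat.factorial_succ]
    push_cast
    rw [h3]
    ring

lemma choose_cast_prod {x σ : ℕ} (h : σ ≤ x) :
    (x.choose σ : ℝ) * (Nat.factorial σ : ℝ) = ∏ j ∈ Finset.range σ, ((x : ℝ) - j) := by
  have h1 : (x.descFactorial σ : ℝ) = ∏ j ∈ Finset.range σ, ((x : ℝ) - j) := by
    rw [Nat.descFactorial_eq_prod_range, Nat.cast_prod]
    refine Finset.prod_congr rfl fun j hj => ?_
    have : j ≤ x := le_trans (le_of_lt (Finset.mem_range.1 hj)) h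
    push_cast [Nat.cast_sub this]; ring
  rw [← h1, Nat.descFactorial_eq_factorial_mul_choose]
  push_cast; ring

-- counting supersets of a fixed set inside powersetCard
lemma card_filter_superset {V : Type*} [DecidableEq V] (P T : Finset V) (hTP : T ⊆ P)
    {m σ : ℕ} (hT : T.card = σ) (hσm : σ ≤ m) :
    ((P.powersetCard m).filter (fun s => T ⊆ s)).card = (P.card - σ).choose (m - σ) := by
  rw [← hT, ← Finset.card_sdiff_of_subset hTP, ← Finset.card_powersetCard]
  apply Finset.card_bij' (fun s _ => s \ T) (fun e _ => e ∪ T)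
  · intro s hs
    simp only [Finset.mem_filter, Finset.mem_powersetCard] at hs
    obtain ⟨⟨hsP, hsc⟩, hTs⟩ := hs
    rw [Finset.mem_powersetCard]
    constructor
    · exact Finset.sdiff_subset_sdiff hsP (le_refl T)
    · rw [Finset.card_sdiff_of_subset hTs, hsc]
  · intro e he
    rw [Finset.mem_powersetCard] at he
    obtain ⟨heP, hec⟩ := he
    have hdisj : Disjoint e T := by
      refine Finset.disjoint_left.2 fun w hw hwT => ?_
      exact (Finset.mem_sdiff.1 (heP hw)).2 hwT
    simp only [Finset.mem_filter, Finset.mem_powersetCard]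
    refine ⟨⟨?_, ?_⟩, Finset.subset_union_right⟩
    · exact Finset.union_subset (heP.trans Finset.sdiff_subset) hTP
    · rw [Finset.card_union_of_disjoint hdisj, hec, hT]
      omega
  · intro s hs
    simp only [Finset.mem_filter] at hs
    exact Finset.sdiff_union_of_subset hs.2
  · intro e he
    rw [Finset.mem_powersetCard] at he
    have hdisj : Disjoint e T := by
      refine Finset.disjoint_left.2 fun w hw hwT => ?_
      exact (Finset.mem_sdiff.1 (he.1 hw)).2 hwT
    exact Finset.union_sdiff_cancel_right hdisj

lemma sum_choose_inter {V : Type*} [DecidableEq V] (P B : Finset V) (hBP : B ⊆ P)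
    {m σ : ℕ} (hσm : σ ≤ m) :
    ∑ s ∈ P.powersetCard m, ((s ∩ B).card.choose σ)
      = (B.card.choose σ) * ((P.card - σ).choose (m - σ)) := by
  have step : ∀ s ∈ P.powersetCard m,
      (s ∩ B).card.choose σ = ∑ T ∈ B.powersetCard σ, if T ⊆ s then 1 else 0 := by
    intro s _
    rw [← Finset.card_filter]
    rw [← Finset.card_powersetCard]
    congr 1
    ext T
    simp only [Finset.mem_powersetCard, Finset.mem_filter, Finset.subset_inter_iff]
    tauto
  rw [Finset.sum_congr rfl step, Finset.sum_comm]
  have inner : ∀ T ∈ B.powersetCard σ,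
      ∑ s ∈ P.powersetCard m, (if T ⊆ s then 1 else 0) = (P.card - σ).choose (m - σ) := by
    intro T hT
    rw [Finset.mem_powersetCard] at hT
    rw [← Finset.card_filter]
    exact card_filter_superset P T (hT.1.trans hBP) hT.2 hσm
  rw [Finset.sum_congr rfl inner, Finset.sum_const, Finset.card_powersetCard, smul_eq_mul]
set_option maxHeartbeats 2000000 in
lemma hyper_tail {V : Type*} [DecidableEq V] (P B : Finset V) (hBP : B ⊆ P)
    (m t σ : ℕ) (ε : ℝ) (hε0 : 0 < ε)
    (hm : m ≤ P.card) (hσ1 : 1 ≤ σ) (hσm : σ ≤ m) (ht1 : 1 ≤ t)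
    (hμt : (1 + ε) * ((m : ℝ) * B.card / P.card) ≤ t)
    (hσt : (σ : ℝ) - 1 ≤ (t : ℝ) - (m : ℝ) * B.card / P.card) :
    (((P.powersetCard m).filter (fun s => t ≤ (s ∩ B).card)).card : ℝ) ≤
      Real.exp (-(σ : ℝ) * Real.log (1 + ε) / 2) * (P.card.choose m) := by
  set N := P.card with hN
  set b := B.card with hb
  by_cases hbt : b < t
  · have hemp : (P.powersetCard m).filter (fun s => t ≤ (s ∩ B).card) = ∅ := by
      refine Finset.filter_eq_empty_iff.2 fun s _ => ?_
      have : (s ∩ B).card ≤ b := Finset.card_le_card Finset.inter_subset_right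
      omega
    rw [hemp]
    simp only [Finset.card_empty, Nat.cast_zero]
    positivity
  push_neg at hbt
  have hbN : b ≤ N := Finset.card_le_card hBP
  have hb0 : 0 < b := lt_of_lt_of_le ht1 hbt
  have hN0 : 0 < N := lt_of_lt_of_le hb0 hbN
  have hm0 : 0 < m := lt_of_lt_of_le hσ1 hσm
  have hN0R : (0:ℝ) < N := by exact_mod_cast hN0
  have hm0R : (0:ℝ) < m := by exact_mod_cast hm0
  have hb0R : (0:ℝ) < b := by exact_mod_cast hb0
  set μ : ℝ := (m : ℝ) * b / N with hμ
  have hμ0 : 0 < μ := by positivity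
  have hμt' : μ < t := by nlinarith
  have ht0R : (0:ℝ) < t := lt_trans hμ0 hμt'
  have hσtn : σ ≤ t := by
    have h1 : (σ : ℝ) < (t : ℝ) + 1 := by linarith
    have h2 : σ < t + 1 := by exact_mod_cast h1
    omega
  have htb : (t : ℝ) ≤ b := by exact_mod_cast hbt
  have hmN : (m : ℝ) ≤ N := by exact_mod_cast hm
  set F := (P.powersetCard m).filter (fun s => t ≤ (s ∩ B).card) with hF
  have count : t.choose σ * F.card ≤ b.choose σ * ((N - σ).choose (m - σ)) := by
    calc t.choose σ * F.card = ∑ _s ∈ F, t.choose σ := by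
          rw [Finset.sum_const, smul_eq_mul, mul_comm]
      _ ≤ ∑ s ∈ F, (s ∩ B).card.choose σ := by
          refine Finset.sum_le_sum fun s hs => ?_
          exact Nat.choose_le_choose σ (Finset.mem_filter.1 hs).2
      _ ≤ ∑ s ∈ P.powersetCard m, (s ∩ B).card.choose σ :=
          Finset.sum_le_sum_of_subset (Finset.filter_subset _ _)
      _ = b.choose σ * ((N - σ).choose (m - σ)) := sum_choose_inter P B hBP hσm
  set E : ℝ := Real.exp (-(σ : ℝ) * Real.log (1 + ε) / 2) with hE
  set c : ℝ := Real.log ((t : ℝ) / μ) / ((t : ℝ) - μ) with hc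
  have htμpos : (0:ℝ) < (t:ℝ) - μ := by linarith
  have h1εtμ : 1 + ε ≤ (t:ℝ)/μ := (le_div_iff₀ hμ0).2 (by linarith [hμt])
  have hlogtμ : 0 ≤ Real.log ((t:ℝ)/μ) := Real.log_nonneg (by linarith)
  have hc0 : 0 ≤ c := div_nonneg hlogtμ htμpos.le
  -- bounds on j
  have jfacts : ∀ j ∈ Finset.range σ, (j:ℝ) ≤ (σ:ℝ) - 1 ∧ (j:ℝ) ≤ (m:ℝ) - 1 ∧ (j:ℝ) ≤ (b:ℝ) - 1 := by
    intro j hj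
    rw [Finset.mem_range] at hj
    have h1 : j + 1 ≤ σ := hj
    have h2 : j + 1 ≤ m := le_trans h1 hσm
    have h3 : j + 1 ≤ b := le_trans h1 (le_trans hσtn hbt)
    have c1 : ((j:ℝ) + 1) ≤ σ := by exact_mod_cast h1
    have c2 : ((j:ℝ) + 1) ≤ m := by exact_mod_cast h2
    have c3 : ((j:ℝ) + 1) ≤ b := by exact_mod_cast h3
    exact ⟨by linarith, by linarith, by linarith⟩
  have term : ∀ j ∈ Finset.range σ,
      ((b:ℝ) - j) * ((m:ℝ) - j)
        ≤ (Real.exp (-((((t:ℝ) - j) - μ) * c))) * ((((t:ℝ) - j)) * ((N:ℝ) - j)) := by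
    intro j hj
    obtain ⟨hjσ, hjm, hjb⟩ := jfacts j hj
    have hjt : (j : ℝ) ≤ (t:ℝ) - μ := by linarith
    have hjN : (j : ℝ) ≤ (N:ℝ) - 1 := by linarith
    set x : ℝ := (t : ℝ) - j with hx
    have hxμ : μ ≤ x := by simp only [hx]; linarith
    have hxt : x ≤ (t:ℝ) := by
      have : (0:ℝ) ≤ j := Nat.cast_nonneg j
      simp only [hx]; linarith
    have hxpos : 0 < x := lt_of_lt_of_le hμ0 hxμ
    -- step 1
    have key1 : (b:ℝ)*m*((N:ℝ)-j) - ((b:ℝ)-j)*((m:ℝ)-j)*N = (j:ℝ)*b*((N:ℝ)-m) + (j:ℝ)*N*((m:ℝ)-j) := by ring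
    have hj0 : (0:ℝ) ≤ j := Nat.cast_nonneg j
    have key1' : ((b:ℝ)-j)*((m:ℝ)-j)*N ≤ (b:ℝ)*m*((N:ℝ)-j) := by
      nlinarith [mul_nonneg (mul_nonneg hj0 hb0R.le) (by linarith : (0:ℝ) ≤ (N:ℝ)-m),
        mul_nonneg (mul_nonneg hj0 hN0R.le) (by linarith : (0:ℝ) ≤ (m:ℝ)-j)]
    have step1 : ((b:ℝ)-j)*((m:ℝ)-j) ≤ μ*((N:ℝ)-j) := by
      rw [hμ]
      rw [show (m:ℝ)*b/N*((N:ℝ)-j) = (b:ℝ)*m*((N:ℝ)-j)/N by ring]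
      rw [le_div_iff₀ hN0R]
      linarith
    -- step 2 : chord bound
    set aw : ℝ := ((t:ℝ) - x)/((t:ℝ)-μ) with haw'
    set bw : ℝ := (x - μ)/((t:ℝ)-μ) with hbw'
    have haw : 0 ≤ aw := div_nonneg (by linarith) htμpos.le
    have hbw : 0 ≤ bw := div_nonneg (by linarith) htμpos.le
    have hab : aw + bw = 1 := by
      rw [haw', hbw', ← add_div, show ((t:ℝ)-x)+(x-μ) = (t:ℝ)-μ by ring]
      exact div_self (ne_of_gt htμpos)
    have hcomb : aw * μ + bw * (t:ℝ) = x := by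
      rw [haw', hbw', div_mul_eq_mul_div, div_mul_eq_mul_div, ← add_div,
        show ((t:ℝ)-x)*μ + (x-μ)*(t:ℝ) = x*((t:ℝ)-μ) by ring, mul_div_assoc,
        div_self (ne_of_gt htμpos), mul_one]
    have hconc := (strictConcaveOn_log_Ioi.concaveOn).2 (Set.mem_Ioi.2 hμ0)
      (Set.mem_Ioi.2 ht0R) haw hbw hab
    rw [smul_eq_mul, smul_eq_mul, smul_eq_mul, smul_eq_mul, hcomb] at hconc
    have hxc : (x - μ) * c = bw * (Real.log (t:ℝ) - Real.log μ) := by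
      rw [hc, hbw', Real.log_div (ne_of_gt ht0R) (ne_of_gt hμ0)]; ring
    have hchord : (x - μ) * c ≤ Real.log x - Real.log μ := by
      rw [hxc]
      have haw1 : aw = 1 - bw := by linarith
      rw [haw1] at hconc
      nlinarith [hconc]
    have hexpx : Real.exp ((x-μ)*c) * μ ≤ x := by
      have h5 : Real.exp ((x-μ)*c) ≤ x / μ := by
        rw [← Real.exp_log (show (0:ℝ) < x/μ by positivity)]
        apply Real.exp_le_exp.2
        rw [Real.log_div (ne_of_gt hxpos) (ne_of_gt hμ0)]
        linarith
      calc Real.exp ((x-μ)*c) * μ ≤ (x/μ) * μ := by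
            exact mul_le_mul_of_nonneg_right h5 hμ0.le
        _ = x := div_mul_cancel₀ x (ne_of_gt hμ0)
    have step2 : μ ≤ Real.exp (-((x-μ)*c)) * x := by
      calc μ = (Real.exp ((x-μ)*c) * μ) * Real.exp (-((x-μ)*c)) := by
            rw [mul_comm (Real.exp ((x-μ)*c)) μ, mul_assoc, ← Real.exp_add]
            simp
        _ ≤ x * Real.exp (-((x-μ)*c)) := mul_le_mul_of_nonneg_right hexpx (Real.exp_nonneg _)
        _ = Real.exp (-((x-μ)*c)) * x := by ring
    calc ((b:ℝ)-j)*((m:ℝ)-j) ≤ μ*((N:ℝ)-j) := step1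
      _ ≤ (Real.exp (-((x-μ)*c)) * x) * ((N:ℝ)-j) := by
          exact mul_le_mul_of_nonneg_right step2 (by linarith)
      _ = Real.exp (-((x-μ)*c)) * (x * ((N:ℝ)-j)) := by ring
  -- product inequality
  have PI : ∏ j ∈ Finset.range σ, (((b:ℝ)-j)*((m:ℝ)-j))
      ≤ ∏ j ∈ Finset.range σ, (Real.exp (-((((t:ℝ)-j)-μ)*c)) * (((t:ℝ)-j)*((N:ℝ)-j))) := by
    refine Finset.prod_le_prod (fun j hj => ?_) term
    obtain ⟨hjσ, hjm, hjb⟩ := jfacts j hj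
    have hj0 : (0:ℝ) ≤ j := Nat.cast_nonneg j
    exact mul_nonneg (by linarith) (by linarith)
  have hsum : ∑ j ∈ Finset.range σ, ((j:ℝ)) = (σ:ℝ)*((σ:ℝ)-1)/2 := by
    have h2 := Finset.sum_range_id_mul_two σ
    have h3 := congrArg (Nat.cast : ℕ → ℝ) h2
    push_cast [Nat.cast_sub hσ1] at h3
    linarith
  have hexpprod : ∏ j ∈ Finset.range σ, Real.exp (-((((t:ℝ)-j)-μ)*c))
      = Real.exp (c*((σ:ℝ)*((σ:ℝ)-1)/2) - (σ:ℝ)*(c*((t:ℝ)-μ))) := by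
    rw [← Real.exp_sum]
    congr 1
    have hcongr : ∀ j ∈ Finset.range σ, -((((t:ℝ)-j)-μ)*c) = c*(j:ℝ) - c*((t:ℝ)-μ) :=
      fun j _ => by ring
    rw [Finset.sum_congr rfl hcongr, Finset.sum_sub_distrib, ← Finset.mul_sum, hsum,
      Finset.sum_const, Finset.card_range, nsmul_eq_mul]
  have hct : c * ((t:ℝ)-μ) = Real.log ((t:ℝ)/μ) := by
    rw [hc, div_mul_cancel₀ _ (ne_of_gt htμpos)]
  have hlog2 : Real.log (1+ε) ≤ Real.log ((t:ℝ)/μ) := by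
    apply Real.log_le_log (by linarith) h1εtμ
  have hexpbound : c*((σ:ℝ)*((σ:ℝ)-1)/2) - (σ:ℝ)*(c*((t:ℝ)-μ)) ≤ -(σ:ℝ)*Real.log (1+ε)/2 := by
    have hσ0R : (0:ℝ) ≤ σ := Nat.cast_nonneg σ
    have h6 : (σ:ℝ)*((σ:ℝ)-1)/2 ≤ (σ:ℝ)*((t:ℝ)-μ)/2 := by nlinarith
    have h7 : c*((σ:ℝ)*((σ:ℝ)-1)/2) ≤ c*((σ:ℝ)*((t:ℝ)-μ)/2) :=
      mul_le_mul_of_nonneg_left h6 hc0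
    have h8 : (σ:ℝ)*Real.log (1+ε) ≤ (σ:ℝ)*(c*((t:ℝ)-μ)) := by
      rw [hct]
      exact mul_le_mul_of_nonneg_left hlog2 hσ0R
    nlinarith [h7, h8]
  have hprod_t_pos : ∀ j ∈ Finset.range σ, (0:ℝ) ≤ ((t:ℝ)-j)*((N:ℝ)-j) := by
    intro j hj
    obtain ⟨hjσ, hjm, hjb⟩ := jfacts j hj
    have hjt : (j : ℝ) ≤ (t:ℝ) - μ := by linarith
    have : (0:ℝ) ≤ j := Nat.cast_nonneg j
    exact mul_nonneg (by linarith) (by linarith)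
  have PIfinal : ∏ j ∈ Finset.range σ, (((b:ℝ)-j)*((m:ℝ)-j))
      ≤ E * ((∏ j ∈ Finset.range σ, ((t:ℝ)-j)) * (∏ j ∈ Finset.range σ, ((N:ℝ)-j))) := by
    calc ∏ j ∈ Finset.range σ, (((b:ℝ)-j)*((m:ℝ)-j))
        ≤ ∏ j ∈ Finset.range σ, (Real.exp (-((((t:ℝ)-j)-μ)*c)) * (((t:ℝ)-j)*((N:ℝ)-j))) := PI
      _ = (∏ j ∈ Finset.range σ, Real.exp (-((((t:ℝ)-j)-μ)*c)))
            * ∏ j ∈ Finset.range σ, (((t:ℝ)-j)*((N:ℝ)-j)) := Finset.prod_mul_distrib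
      _ ≤ E * ∏ j ∈ Finset.range σ, (((t:ℝ)-j)*((N:ℝ)-j)) := by
          refine mul_le_mul_of_nonneg_right ?_ (Finset.prod_nonneg hprod_t_pos)
          rw [hexpprod, hE]
          exact Real.exp_le_exp.2 hexpbound
      _ = E * ((∏ j ∈ Finset.range σ, ((t:ℝ)-j)) * (∏ j ∈ Finset.range σ, ((N:ℝ)-j))) := by
          rw [Finset.prod_mul_distrib]
  -- convert to binomial coefficients
  have hσb : σ ≤ b := le_trans hσtn hbt
  have hσN : σ ≤ N := le_trans hσm hm
  have hb2 := choose_cast_prod hσb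
  have ht2 := choose_cast_prod hσtn
  have hm3 := fact_prod_cast m σ hσm
  have hN3 := fact_prod_cast N σ hσN
  have hNmc : ((N-σ).choose (m-σ):ℝ) * ((Nat.factorial (m-σ):ℝ) * (Nat.factorial (N-m):ℝ))
      = (Nat.factorial (N-σ):ℝ) := by
    have h' : m - σ ≤ N - σ := by omega
    have h'' : (N - σ) - (m - σ) = N - m := by omega
    rw [Nat.cast_choose ℝ h', h'']
    have f1 : (Nat.factorial (m-σ):ℝ) ≠ 0 := by exact_mod_cast (Nat.factorial_pos _).ne'
    have f2 : (Nat.factorial (N-m):ℝ) ≠ 0 := by exact_mod_cast (Nat.factorial_pos _).ne'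
    field_simp
  have hNc : (N.choose m : ℝ) * ((Nat.factorial m:ℝ) * (Nat.factorial (N-m):ℝ))
      = (Nat.factorial N:ℝ) := by
    rw [Nat.cast_choose ℝ hm]
    have f1 : (Nat.factorial m:ℝ) ≠ 0 := by exact_mod_cast (Nat.factorial_pos _).ne'
    have f2 : (Nat.factorial (N-m):ℝ) ≠ 0 := by exact_mod_cast (Nat.factorial_pos _).ne'
    field_simp
  have hprodm_pos : (0:ℝ) < ∏ j ∈ Finset.range σ, ((m:ℝ)-j) := by
    refine Finset.prod_pos fun j hj => ?_
    obtain ⟨hjσ, hjm, hjb⟩ := jfacts j hj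
    linarith
  set D : ℝ := (Nat.factorial σ : ℝ) * ((Nat.factorial (m-σ):ℝ)
      * ((Nat.factorial (N-m):ℝ) * ∏ j ∈ Finset.range σ, ((m:ℝ)-j))) with hD'
  have hD : (0:ℝ) < D := by
    have f0 : (0:ℝ) < (Nat.factorial σ:ℝ) := by exact_mod_cast Nat.factorial_pos σ
    have f1 : (0:ℝ) < (Nat.factorial (m-σ):ℝ) := by exact_mod_cast Nat.factorial_pos (m-σ)
    have f2 : (0:ℝ) < (Nat.factorial (N-m):ℝ) := by exact_mod_cast Nat.factorial_pos (N-m)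
    exact mul_pos f0 (mul_pos f1 (mul_pos f2 hprodm_pos))
  have key : (b.choose σ:ℝ) * ((N-σ).choose (m-σ):ℝ) ≤ E * ((t.choose σ:ℝ) * (N.choose m:ℝ)) := by
    rw [← mul_le_mul_iff_of_pos_right hD]
    have lhs_eq : ((b.choose σ:ℝ) * ((N-σ).choose (m-σ):ℝ)) * D
        = ((∏ j ∈ Finset.range σ, ((b:ℝ)-j)) * ∏ j ∈ Finset.range σ, ((m:ℝ)-j))
            * (Nat.factorial (N-σ):ℝ) := by
      calc ((b.choose σ:ℝ) * ((N-σ).choose (m-σ):ℝ)) * D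
          = ((b.choose σ:ℝ) * (Nat.factorial σ:ℝ))
            * (((N-σ).choose (m-σ):ℝ) * ((Nat.factorial (m-σ):ℝ) * (Nat.factorial (N-m):ℝ)))
            * ∏ j ∈ Finset.range σ, ((m:ℝ)-j) := by rw [hD']; ring
        _ = _ := by rw [hb2, hNmc]; ring
    have rhs_eq : (E * ((t.choose σ:ℝ) * (N.choose m:ℝ))) * D
        = (E * ((∏ j ∈ Finset.range σ, ((t:ℝ)-j)) * (∏ j ∈ Finset.range σ, ((N:ℝ)-j))))
            * (Nat.factorial (N-σ):ℝ) := by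
      calc (E * ((t.choose σ:ℝ) * (N.choose m:ℝ))) * D
          = E * ((t.choose σ:ℝ) * (Nat.factorial σ:ℝ))
            * ((N.choose m:ℝ) * (((Nat.factorial (m-σ):ℝ) * ∏ j ∈ Finset.range σ, ((m:ℝ)-j))
              * (Nat.factorial (N-m):ℝ))) := by rw [hD']; ring
        _ = E * (∏ j ∈ Finset.range σ, ((t:ℝ)-j))
            * ((N.choose m:ℝ) * ((Nat.factorial m:ℝ) * (Nat.factorial (N-m):ℝ))) := by
              rw [ht2, hm3]
        _ = E * (∏ j ∈ Finset.range σ, ((t:ℝ)-j)) * (Nat.factorial N:ℝ) := by rw [hNc]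
        _ = E * (∏ j ∈ Finset.range σ, ((t:ℝ)-j))
              * ((Nat.factorial (N-σ):ℝ) * ∏ j ∈ Finset.range σ, ((N:ℝ)-j)) := by rw [hN3]
        _ = _ := by ring
    rw [lhs_eq, rhs_eq]
    refine mul_le_mul_of_nonneg_right ?_ (Nat.cast_nonneg _)
    calc (∏ j ∈ Finset.range σ, ((b:ℝ)-j)) * ∏ j ∈ Finset.range σ, ((m:ℝ)-j)
        = ∏ j ∈ Finset.range σ, (((b:ℝ)-j)*((m:ℝ)-j)) := Finset.prod_mul_distrib.symm
      _ ≤ E * ((∏ j ∈ Finset.range σ, ((t:ℝ)-j)) * (∏ j ∈ Finset.range σ, ((N:ℝ)-j))) := PIfinal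
  -- finish
  have htcpos : (0:ℝ) < (t.choose σ : ℝ) := by exact_mod_cast Nat.choose_pos hσtn
  have countR : (t.choose σ:ℝ) * (F.card:ℝ) ≤ (b.choose σ:ℝ)*(((N-σ).choose (m-σ)):ℝ) := by
    exact_mod_cast count
  have final : (t.choose σ:ℝ) * (F.card:ℝ) ≤ (t.choose σ:ℝ) * (E * (N.choose m:ℝ)) := by
    calc (t.choose σ:ℝ) * (F.card:ℝ) ≤ E * ((t.choose σ:ℝ) * (N.choose m:ℝ)) :=
        le_trans countR key
      _ = (t.choose σ:ℝ) * (E * (N.choose m:ℝ)) := by ring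
  exact le_of_mul_le_mul_left final htcpos
-- subtype of product splitting
def subtypeProdFst {α β : Type*} (p : α → Prop) : {y : α × β // p y.1} ≃ {a : α // p a} × β where
  toFun y := (⟨y.1.1, y.2⟩, y.1.2)
  invFun z := ⟨(z.1.1, z.2), z.1.2⟩
  left_inv := by rintro ⟨⟨a, b⟩, h⟩; rfl
  right_inv := by rintro ⟨⟨a, h⟩, b⟩; rfl

lemma prob_pi {ι : Type*} [Fintype ι] [DecidableEq ι] (C : ι → Type*) [∀ i, Fintype (C i)]
    [∀ i, Nonempty (C i)] (i₀ : ι) (p : C i₀ → Prop) :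
    prob {f : ∀ i, C i | p (f i₀)} = prob {x : C i₀ | p x} := by
  classical
  have e1 : {f : ∀ i, C i // p (f i₀)} ≃ {y : C i₀ × (∀ j : {j // j ≠ i₀}, C j) // p y.1} :=
    (Equiv.piSplitAt i₀ C).subtypeEquiv (fun f => by simp)
  have e2 := (subtypeProdFst (β := ∀ j : {j // j ≠ i₀}, C j) p)
  set Q := Nat.card (∀ j : {j // j ≠ i₀}, C j) with hQ
  have hQ0 : 0 < Q := Nat.card_pos
  have h1 : {f : ∀ i, C i | p (f i₀)}.ncard = Nat.card {x : C i₀ // p x} * Q := by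
    rw [← Nat.card_coe_set_eq, Set.coe_setOf, Nat.card_congr (e1.trans e2), Nat.card_prod]
  have h2 : Fintype.card (∀ i, C i) = Fintype.card (C i₀) * Q := by
    rw [← Nat.card_eq_fintype_card, Nat.card_congr (Equiv.piSplitAt i₀ C), Nat.card_prod, Nat.card_eq_fintype_card]
  have h3 : {x : C i₀ | p x}.ncard = Nat.card {x : C i₀ // p x} := by
    rw [← Nat.card_coe_set_eq, Set.coe_setOf]
  simp only [prob]
  rw [h1, h2, h3]
  push_cast
  rw [mul_div_mul_right]
  exact_mod_cast hQ0.ne'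
lemma prob_coord {V : Type*} [Fintype V] [DecidableEq V] (pos : V → V → Bool) (m : ℕ) (u : V)
    (q : Finset V → Prop) [DecidablePred q] :
    prob {ω : SampleSpace pos m | q (ω u).1}
      = ((((Np pos u).powersetCard (min m (Np pos u).card)).filter q).card : ℝ)
        / ((Np pos u).card.choose (min m (Np pos u).card) : ℝ) := by
  classical
  haveI hne : ∀ w : V, Nonempty {s : Finset V // s ⊆ Np pos w ∧ s.card = min m (Np pos w).card} := by
    intro w
    obtain ⟨s, hs, hc⟩ := Finset.exists_subset_card_eq (min_le_right m (Np pos w).card)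
    exact ⟨⟨s, hs, hc⟩⟩
  have h := prob_pi (fun w => {s : Finset V // s ⊆ Np pos w ∧ s.card = min m (Np pos w).card}) u
    (fun x => q x.1)
  rw [h]
  set k := min m (Np pos u).card with hk
  set P := Np pos u with hP
  have e1 : {x : {s : Finset V // s ⊆ P ∧ s.card = k} // q x.1}
      ≃ {s : Finset V // s ∈ (P.powersetCard k).filter q} :=
    { toFun := fun x => ⟨x.1.1, by
        rw [Finset.mem_filter, Finset.mem_powersetCard]
        exact ⟨⟨x.1.2.1, x.1.2.2⟩, x.2⟩⟩
      invFun := fun s => ⟨⟨s.1, (Finset.mem_powersetCard.1 (Finset.mem_filter.1 s.2).1).1,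
        (Finset.mem_powersetCard.1 (Finset.mem_filter.1 s.2).1).2⟩, (Finset.mem_filter.1 s.2).2⟩
      left_inv := by rintro ⟨⟨s, h1, h2⟩, h3⟩; rfl
      right_inv := by rintro ⟨s, hs⟩; rfl }
  have e2 : {s : Finset V // s ⊆ P ∧ s.card = k} ≃ {s : Finset V // s ∈ P.powersetCard k} :=
    Equiv.subtypeEquivRight (fun s => (Finset.mem_powersetCard).symm)
  have hnum : {x : {s : Finset V // s ⊆ P ∧ s.card = k} | q x.1}.ncard
      = ((P.powersetCard k).filter q).card := by
    rw [← Nat.card_coe_set_eq, Set.coe_setOf, Nat.card_congr e1,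
      Nat.card_eq_fintype_card, Fintype.card_coe]
  have hden : Fintype.card {s : Finset V // s ⊆ P ∧ s.card = k} = P.card.choose k := by
    rw [← Nat.card_eq_fintype_card, Nat.card_congr e2, Nat.card_eq_fintype_card,
      Fintype.card_coe, Finset.card_powersetCard]
  simp only [prob]
  rw [hnum, hden]

end AuxProof

set_option maxHeartbeats 4000000 in
/-- concentration of `Y^{(u,v)}`. -/
theorem Yest_concentration
    {V : Type*} [Fintype V] [DecidableEq V] (pos : V → V → Bool)
    (hsymm : ∀ u v, pos u v = pos v u) (hrefl : ∀ u, pos u u = true)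
    (ε : ℝ) (hε0 : 0 < ε) (hε1 : ε < 1) (u v : V)
    (h : ((Np pos u).card : ℝ) / 2 ≤ ((Np pos u ∩ Nm pos v).card : ℝ)) :
    prob {ω : SampleSpace pos (mSample V ε) |
        Yest pos ω u v ≤ (1 - ε) * ((Np pos u ∩ Nm pos v).card : ℝ)} ≤
      1 / (Fintype.card V : ℝ) ^ 4 ∧
    prob {ω : SampleSpace pos (mSample V ε) |
        (1 + ε) * ((Np pos u ∩ Nm pos v).card : ℝ) ≤ Yest pos ω u v} ≤
      1 / (Fintype.card V : ℝ) ^ 4 := by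
  classical
  have hn0R : (0:ℝ) < (Fintype.card V : ℝ) := by
    have : 0 < Fintype.card V := Fintype.card_pos_iff.2 ⟨u⟩
    exact_mod_cast this
  have huP : u ∈ Np pos u := by simp [Np, hrefl u]
  have hN0 : 0 < (Np pos u).card := Finset.card_pos.2 ⟨u, huP⟩
  have hN0R : (0:ℝ) < ((Np pos u).card : ℝ) := by exact_mod_cast hN0
  have ha0R : (0:ℝ) < ((Np pos u ∩ Nm pos v).card : ℝ) := by
    have : (0:ℝ) < ((Np pos u).card : ℝ)/2 := by positivity
    linarith
  have ha0 : 0 < (Np pos u ∩ Nm pos v).card := by exact_mod_cast ha0R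
  have hRHS0 : (0:ℝ) ≤ 1/((Fintype.card V : ℝ))^4 := by positivity
  set m := mSample V ε with hmdef
  clear_value m
  by_cases hm : m ≤ (Np pos u).card
  swap
  · -- deterministic branch
    constructor
    · have hset : {ω : SampleSpace pos m | Yest pos ω u v
          ≤ (1 - ε) * ((Np pos u ∩ Nm pos v).card : ℝ)} = ∅ := by
        ext ω
        simp only [Set.mem_setOf_eq, Set.mem_empty_iff_false, iff_false, not_le, Yest, if_neg hm]
        nlinarith
      rw [hset]
      simpa [prob] using hRHS0
    · have hset : {ω : SampleSpace pos m | (1 + ε) * ((Np pos u ∩ Nm pos v).card : ℝ)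
          ≤ Yest pos ω u v} = ∅ := by
        ext ω
        simp only [Set.mem_setOf_eq, Set.mem_empty_iff_false, iff_false, not_le, Yest, if_neg hm]
        have hcard : ((Np pos u ∩ Nm pos v).card : ℝ) ≤ ((Np pos u).card : ℝ) := by
          exact_mod_cast Finset.card_le_card Finset.inter_subset_left
        nlinarith
      rw [hset]
      simpa [prob] using hRHS0
  -- main branch
  have hminN : min m (Np pos u).card = m := min_eq_left hm
  -- the graph has at least 2 vertices
  obtain ⟨w, hw⟩ := Finset.card_pos.1 ha0
  have hwNm : w ∈ Nm pos v := (Finset.mem_inter.1 hw).2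
  have hwv : w ≠ v := by
    intro he
    rw [he] at hwNm
    simp [Nm, hrefl v] at hwNm
  have hn2 : 2 ≤ Fintype.card V := Fintype.one_lt_card_iff.2 ⟨w, v, hwv⟩
  have hL0 : 0 < Real.log (Fintype.card V) := Real.log_pos (by exact_mod_cast hn2)
  have hmR : 32/ε^2 * Real.log (Fintype.card V) ≤ (m:ℝ) := by
    rw [hmdef, mSample]
    exact Nat.le_ceil _
  have hm0 : 0 < m := by
    rcases Nat.eq_zero_or_pos m with h0 | h0
    · exfalso
      have hpos : (0:ℝ) < 32/ε^2 * Real.log (Fintype.card V) := by positivity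
      rw [h0] at hmR
      push_cast at hmR
      linarith
    · exact h0
  have hm0R : (0:ℝ) < (m : ℝ) := by exact_mod_cast hm0
  set σ := ⌈ε * m / 2⌉₊ with hσdef
  clear_value σ
  have hσ1 : 1 ≤ σ := by
    have : 0 < σ := by rw [hσdef]; exact Nat.ceil_pos.2 (by positivity)
    omega
  have hσm : σ ≤ m := by
    rw [hσdef]
    rw [Nat.ceil_le]
    nlinarith
  have hσR : ε * m / 2 ≤ (σ:ℝ) := by rw [hσdef]; exact Nat.le_ceil _
  have hσR2 : (σ:ℝ) ≤ ε * m / 2 + 1 := by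
    have := Nat.ceil_lt_add_one (show (0:ℝ) ≤ ε * m / 2 by positivity)
    rw [hσdef]
    linarith
  -- the key exponential bound
  have hlog : ε/2 ≤ Real.log (1 + ε) := by
    have hp : (0:ℝ) < 1 + ε := by linarith
    have h1 : 1 - (1+ε)⁻¹ ≤ Real.log (1+ε) := Real.one_sub_inv_le_log_of_pos hp
    have h3 : ε/(1+ε) = 1 - (1+ε)⁻¹ := by field_simp; ring
    have h2 : ε/2 ≤ ε/(1+ε) := by
      apply div_le_div_of_nonneg_left hε0.le hp
      linarith
    linarith
  have hfin : Real.exp (-(σ:ℝ) * Real.log (1 + ε) / 2) ≤ 1/((Fintype.card V : ℝ))^4 := by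
    have hεm : 32 * Real.log (Fintype.card V) ≤ ε^2 * m := by
      have h4 := mul_le_mul_of_nonneg_left hmR (sq_nonneg ε)
      have h5 : ε^2 * (32/ε^2 * Real.log (Fintype.card V)) = 32 * Real.log (Fintype.card V) := by
        field_simp
      linarith
    have hσlog : ε * m / 2 * (ε/2) ≤ (σ:ℝ) * Real.log (1+ε) :=
      mul_le_mul hσR hlog (by positivity) (Nat.cast_nonneg σ)
    have hexp : -(σ:ℝ) * Real.log (1+ε) / 2 ≤ -(4 * Real.log (Fintype.card V)) := by
      nlinarith
    calc Real.exp (-(σ:ℝ) * Real.log (1 + ε) / 2)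
        ≤ Real.exp (-(4 * Real.log (Fintype.card V))) := Real.exp_le_exp.2 hexp
      _ = 1/((Fintype.card V : ℝ))^4 := by
          rw [Real.exp_neg, show (4:ℝ) * Real.log (Fintype.card V)
              = ((4:ℕ):ℝ) * Real.log (Fintype.card V) by norm_num,
            Real.exp_nat_mul, Real.exp_log hn0R, one_div]
  have hNcpos : (0:ℝ) < ((Np pos u).card.choose m : ℝ) := by
    exact_mod_cast Nat.choose_pos hm
  have hma2 : (m:ℝ)/2 ≤ (m:ℝ) * ((Np pos u ∩ Nm pos v).card : ℝ) / ((Np pos u).card : ℝ) := by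
    rw [div_le_div_iff₀ (by norm_num) hN0R]
    nlinarith
  constructor
  · -- LOWER TAIL
    set A := Np pos u ∩ Nm pos v with hA
    set B' := Np pos u \ A with hB'
    have hB'P : B' ⊆ Np pos u := Finset.sdiff_subset
    have haN : A.card ≤ (Np pos u).card := Finset.card_le_card Finset.inter_subset_left
    have hb'R : ((B'.card : ℕ) : ℝ) = ((Np pos u).card : ℝ) - (A.card : ℝ) := by
      rw [hB', Finset.card_sdiff_of_subset Finset.inter_subset_left, ← hA]
      push_cast [Nat.cast_sub haN]
      ring
    set τl : ℝ := (m:ℝ) * B'.card / (Np pos u).card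
        + ε * ((m:ℝ) * A.card / (Np pos u).card) with hτl
    set tl := ⌈τl⌉₊ with htldef
    clear_value τl tl
    have hτl0 : 0 < τl := by
      have h1 : (0:ℝ) ≤ (m:ℝ) * B'.card / (Np pos u).card := by positivity
      have h2 : (0:ℝ) < ε * ((m:ℝ) * A.card / (Np pos u).card) := by positivity
      linarith
    have htl1 : 1 ≤ tl := by
      have : 0 < tl := by rw [htldef]; exact Nat.ceil_pos.2 hτl0
      omega
    have htlR : τl ≤ (tl:ℝ) := by rw [htldef]; exact Nat.le_ceil _
    have hb'a : (B'.card : ℝ) ≤ (A.card : ℝ) := by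
      rw [hb'R]; linarith [h]
    have hq : (m:ℝ) * B'.card / (Np pos u).card ≤ (m:ℝ) * A.card / (Np pos u).card := by
      gcongr
    have hμtl : (1 + ε) * ((m:ℝ) * B'.card / (Np pos u).card) ≤ (tl:ℝ) := by
      have := mul_le_mul_of_nonneg_left hq hε0.le
      nlinarith
    have hσtl : (σ:ℝ) - 1 ≤ (tl:ℝ) - (m:ℝ) * B'.card / (Np pos u).card := by
      have h6 : ε * ((m:ℝ)/2) ≤ ε * ((m:ℝ) * A.card / (Np pos u).card) :=
        mul_le_mul_of_nonneg_left hma2 hε0.le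
      nlinarith
    have hev : {ω : SampleSpace pos m | Yest pos ω u v ≤ (1 - ε) * (A.card : ℝ)}
        = {ω : SampleSpace pos m | tl ≤ (((ω u).1 ∩ B').card)} := by
      ext ω
      simp only [Set.mem_setOf_eq]
      have hs : (ω u).1 ⊆ Np pos u := (ω u).2.1
      have hinter : (ω u).1 ∩ Nm pos v = (ω u).1 ∩ A := by
        rw [hA, ← Finset.inter_assoc, Finset.inter_eq_left.2 hs]
      have hsB : (ω u).1 ∩ B' = (ω u).1 \ A := by
        ext x
        simp only [hB', Finset.mem_inter, Finset.mem_sdiff]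
        constructor
        · rintro ⟨hx1, _, hx3⟩; exact ⟨hx1, hx3⟩
        · rintro ⟨hx1, hx2⟩; exact ⟨hx1, hs hx1, hx2⟩
      have hsplit : ((ω u).1 ∩ A).card + ((ω u).1 ∩ B').card = m := by
        rw [hsB, Finset.card_inter_add_card_sdiff, (ω u).2.2, hminN]
      simp only [Yest, if_pos hm, hinter]
      have hXX' : (((ω u).1 ∩ A).card : ℝ) + (((ω u).1 ∩ B').card : ℝ) = (m:ℝ) := by
        exact_mod_cast hsplit
      have hNXX : ((Np pos u).card : ℝ) * (((ω u).1 ∩ A).card)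
          + ((Np pos u).card : ℝ) * (((ω u).1 ∩ B').card) = ((Np pos u).card : ℝ) * m := by
        rw [← mul_add, hXX']
      have hτlN : τl * ((Np pos u).card : ℝ) = (m:ℝ) * B'.card + ε * ((m:ℝ) * A.card) := by
        rw [hτl]
        field_simp
      have hb'aux : (m:ℝ) * B'.card = (m:ℝ) * (Np pos u).card - (m:ℝ) * A.card := by
        rw [hb'R]; ring
      constructor
      · intro hYle
        rw [div_mul_eq_mul_div, div_le_iff₀ hm0R] at hYle
        rw [htldef, Nat.ceil_le, ← mul_le_mul_iff_of_pos_right hN0R, hτlN]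
        linarith [hYle, hb'aux, hNXX]
      · intro htl'
        have hX'ge : τl ≤ (((ω u).1 ∩ B').card : ℝ) := le_trans htlR (by exact_mod_cast htl')
        have h9 := (mul_le_mul_iff_of_pos_right hN0R).2 hX'ge
        rw [hτlN] at h9
        rw [div_mul_eq_mul_div, div_le_iff₀ hm0R]
        linarith [h9, hb'aux, hNXX]
    rw [hev, prob_coord pos m u (fun s => tl ≤ (s ∩ B').card), hminN]
    have htail := hyper_tail (Np pos u) B' hB'P m tl σ ε hε0 hm hσ1 hσm htl1 hμtl hσtl
    calc ((((Np pos u).powersetCard m).filter (fun s => tl ≤ (s ∩ B').card)).card : ℝ)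
          / ((Np pos u).card.choose m : ℝ)
        ≤ (Real.exp (-(σ:ℝ) * Real.log (1 + ε) / 2) * ((Np pos u).card.choose m : ℝ))
          / ((Np pos u).card.choose m : ℝ) := by
          exact (div_le_div_iff_of_pos_right hNcpos).2 htail
      _ = Real.exp (-(σ:ℝ) * Real.log (1 + ε) / 2) := by
          field_simp
      _ ≤ 1/((Fintype.card V : ℝ))^4 := hfin
  · -- UPPER TAIL
    set A := Np pos u ∩ Nm pos v with hA
    have hAP : A ⊆ Np pos u := Finset.inter_subset_left
    set τu : ℝ := (1 + ε) * ((m:ℝ) * A.card / (Np pos u).card) with hτu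
    set tu := ⌈τu⌉₊ with htudef
    clear_value τu tu
    have hτu0 : 0 < τu := by rw [hτu]; positivity
    have htu1 : 1 ≤ tu := by
      have : 0 < tu := by rw [htudef]; exact Nat.ceil_pos.2 hτu0
      omega
    have htuR : τu ≤ (tu:ℝ) := by rw [htudef]; exact Nat.le_ceil _
    have hμtu : (1 + ε) * ((m:ℝ) * A.card / (Np pos u).card) ≤ (tu:ℝ) := by
      rw [← hτu]; exact htuR
    have hσtu : (σ:ℝ) - 1 ≤ (tu:ℝ) - (m:ℝ) * A.card / (Np pos u).card := by
      have h6 : ε * ((m:ℝ)/2) ≤ ε * ((m:ℝ) * A.card / (Np pos u).card) :=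
        mul_le_mul_of_nonneg_left hma2 hε0.le
      nlinarith
    have hev : {ω : SampleSpace pos m | (1 + ε) * (A.card : ℝ) ≤ Yest pos ω u v}
        = {ω : SampleSpace pos m | tu ≤ (((ω u).1 ∩ A).card)} := by
      ext ω
      simp only [Set.mem_setOf_eq]
      have hs : (ω u).1 ⊆ Np pos u := (ω u).2.1
      have hinter : (ω u).1 ∩ Nm pos v = (ω u).1 ∩ A := by
        rw [hA, ← Finset.inter_assoc, Finset.inter_eq_left.2 hs]
      simp only [Yest, if_pos hm, hinter]
      have hτuN : τu * ((Np pos u).card : ℝ) = (1+ε) * ((m:ℝ) * A.card) := by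
        rw [hτu]
        field_simp
      constructor
      · intro hYge
        rw [div_mul_eq_mul_div, le_div_iff₀ hm0R] at hYge
        rw [htudef, Nat.ceil_le, ← mul_le_mul_iff_of_pos_right hN0R, hτuN]
        linarith [hYge]
      · intro htu'
        have hXge : τu ≤ (((ω u).1 ∩ A).card : ℝ) := le_trans htuR (by exact_mod_cast htu')
        have h9 := (mul_le_mul_iff_of_pos_right hN0R).2 hXge
        rw [hτuN] at h9
        rw [div_mul_eq_mul_div, le_div_iff₀ hm0R]
        linarith [h9]
    rw [hev, prob_coord pos m u (fun s => tu ≤ (s ∩ A).card), hminN]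
    have htail := hyper_tail (Np pos u) A hAP m tu σ ε hε0 hm hσ1 hσm htu1 hμtu hσtu
    calc ((((Np pos u).powersetCard m).filter (fun s => tu ≤ (s ∩ A).card)).card : ℝ)
          / ((Np pos u).card.choose m : ℝ)
        ≤ (Real.exp (-(σ:ℝ) * Real.log (1 + ε) / 2) * ((Np pos u).card.choose m : ℝ))
          / ((Np pos u).card.choose m : ℝ) := by
          exact (div_le_div_iff_of_pos_right hNcpos).2 htail
      _ = Real.exp (-(σ:ℝ) * Real.log (1 + ε) / 2) := by
          field_simp
      _ ≤ 1/((Fintype.card V : ℝ))^4 := hfin
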